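/- Let F ∈ F[x] be a univariate polynomial and let r > i be natural numbers. Then there exists a polynomial H ∈ F[x] such that the i-th Hasse derivative of F^r equals H(x)·F(x)^{r−i}. -/

import Mathlib

open Polynomial in
private lemma hasseDeriv_pow_dvd_aux {K : Type*} [CommRing K] (F : Polynomial K) :
    ∀ r i : ℕ, i < r → F ^ (r - i) ∣ Polynomial.hasseDeriv i (F ^ r) := by
  intro r
  induction r with
  | zero => intro i hi; omega
  | succ r ih =>
    intro i hi
    rw [pow_succ, hasseDeriv_mul]
    apply Finset.dvd_sum
    intro ij hij
    rw [Finset.HasAntidiagonal.mem_antidiagonal] at hij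
    rcases Nat.eq_zero_or_pos ij.2 with h2 | h2
    · -- ij.2 = 0, ij.1 = i
      have h1 : ij.1 = i := by omega
      rcases Nat.lt_or_ge i r with hir | hir
      · have := ih i hir
        have : F ^ (r + 1 - i) ∣ hasseDeriv i (F ^ r) * F := by
          have : r + 1 - i = (r - i) + 1 := by omega
          rw [this, pow_succ]
          exact mul_dvd_mul (ih i hir) dvd_rfl
        rw [h1, h2]
        simpa [hasseDeriv_zero'] using this
      · have hie : i = r := by omega
        have : r + 1 - i = 1 := by omega
        rw [this, pow_one, h1, h2, hasseDeriv_zero']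
        exact Dvd.intro_left _ rfl
    · -- ij.2 ≥ 1 so ij.1 < r
      have h1 : ij.1 < r := by omega
      have hd := ih ij.1 h1
      have hle : r + 1 - i ≤ r - ij.1 := by omega
      exact Dvd.dvd.mul_right ((pow_dvd_pow F hle).trans hd) _

/-- For `i < r`, the `i`-th Hasse derivative of `F^r` is divisible by `F^(r-i)`. -/
theorem hasseDeriv_pow_dvd {K : Type*} [Field K] (F : Polynomial K) (r i : ℕ) (h : i < r) :
    ∃ H : Polynomial K, Polynomial.hasseDeriv i (F ^ r) = H * F ^ (r - i) := by
  obtain ⟨H, hH⟩ := hasseDeriv_pow_dvd_aux F r i h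
  exact ⟨H, by rw [hH, mul_comm]⟩
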